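/- If G is a cycle Cₙ with n ∉ {3, 6, 7, 11}, then ι₁(G) ≤ n/4. -/
import Mathlib


open SimpleGraph

/-- The closed neighborhood `N[D]` of a set `D` of vertices. -/
def SimpleGraph.closedNbhd {V : Type*} (G : SimpleGraph V) (D : Set V) : Set V :=
  D ∪ {v | ∃ d ∈ D, G.Adj d v}

/-- `D` is a `K_{1,k+1}`-isolating set of `G`: every vertex outside `N[D]` has at most `k`
neighbors outside `N[D]`, i.e. `Δ(G − N[D]) ≤ k`. -/
def SimpleGraph.IsIsolatingSet {V : Type*} (G : SimpleGraph V) (k : ℕ) (D : Set V) : Prop :=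
  ∀ v ∉ G.closedNbhd D, ({w | w ∉ G.closedNbhd D ∧ G.Adj v w}).ncard ≤ k

/-- The `k`-isolation number `ι_k(G)`: the least size of a `K_{1,k+1}`-isolating set. -/
noncomputable def SimpleGraph.isolNum {V : Type*} (G : SimpleGraph V) (k : ℕ) : ℕ :=
  sInf {n | ∃ D : Set V, G.IsIsolatingSet k D ∧ D.ncard = n}

/-- adjacency from a successor relation on values -/
lemma cycle_adj_of_succ {n : ℕ} (hn : 3 ≤ n) (a b : Fin n)
    (hab : (a.val + 1) % n = b.val) : (cycleGraph n).Adj a b := by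
  refine cycleGraph_adj'.2 (Or.inr ?_)
  rw [Fin.sub_def]
  simp only
  have ha := a.isLt
  rcases Nat.lt_or_ge (a.val + 1) n with h1 | h1
  · have hb : b.val = a.val + 1 := by rw [← hab, Nat.mod_eq_of_lt h1]
    rw [hb]
    have h2 : n - a.val + (a.val + 1) = n + 1 := by omega
    rw [h2, Nat.add_mod_left, Nat.mod_eq_of_lt (by omega)]
  · have han : a.val + 1 = n := by omega
    have hb0 : b.val = 0 := by rw [← hab, han, Nat.mod_self]
    have h2 : n - a.val + b.val = 1 := by omega
    rw [h2, Nat.mod_eq_of_lt (by omega)]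

/-- adjacency implies a successor relation on values -/
lemma cycle_adj_cases {n : ℕ} (hn : 3 ≤ n) (a b : Fin n)
    (hab : (cycleGraph n).Adj a b) :
    b.val = (a.val + 1) % n ∨ a.val = (b.val + 1) % n := by
  have ha := a.isLt
  have hb := b.isLt
  have key : ∀ u v : Fin n, (u - v).val = 1 → u.val = (v.val + 1) % n := by
    intro u v huv
    rw [Fin.sub_def] at huv
    simp only at huv
    have hu := u.isLt
    have hv := v.isLt
    have hlt : n - v.val + u.val < 2 * n := by omega
    have : n - v.val + u.val = 1 ∨ n - v.val + u.val = n + 1 := by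
      rcases Nat.lt_or_ge (n - v.val + u.val) n with h1 | h1
      · left; rwa [Nat.mod_eq_of_lt h1] at huv
      · right
        rw [Nat.mod_eq_sub_mod h1, Nat.mod_eq_of_lt (by omega)] at huv
        omega
    rcases this with h1 | h1
    · -- u = 0, v = n - 1
      have hu0 : u.val = 0 := by omega
      have hv1 : v.val = n - 1 := by omega
      rw [hu0, hv1]
      have : n - 1 + 1 = n := by omega
      rw [this, Nat.mod_self]
    · have : u.val = v.val + 1 := by omega
      rw [this, Nat.mod_eq_of_lt (by omega)]
  rcases cycleGraph_adj'.1 hab with h | h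
  · exact Or.inr (key a b h)
  · exact Or.inl (key b a h)

/-- characterization of the vertices outside the closed neighborhood of multiples of 5 -/
lemma notMem_closedNbhd {n : ℕ} (hn : 3 ≤ n) (v : Fin n)
    (hv : v ∉ (cycleGraph n).closedNbhd {v : Fin n | 5 ∣ v.val}) :
    (v.val % 5 = 2 ∨ v.val % 5 = 3) ∧ v.val ≠ n - 1 := by
  have hvn := v.isLt
  have hmem : ∀ d : Fin n, 5 ∣ d.val → (cycleGraph n).Adj d v → False := by
    intro d hd hadj
    exact hv (Or.inr ⟨d, hd, hadj⟩)
  have hne : v.val ≠ n - 1 := by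
    intro heq
    have h0 : ((⟨0, by omega⟩ : Fin n) : ℕ) = 0 := rfl
    refine hmem ⟨0, by omega⟩ (by simp) ?_
    refine (cycle_adj_of_succ hn v ⟨0, by omega⟩ ?_).symm
    rw [heq]
    have : n - 1 + 1 = n := by omega
    rw [this, Nat.mod_self, h0]
  refine ⟨?_, hne⟩
  by_contra h5
  have : v.val % 5 = 0 ∨ v.val % 5 = 1 ∨ v.val % 5 = 4 := by omega
  rcases this with h0 | h1 | h4
  · exact hv (Or.inl (Nat.dvd_of_mod_eq_zero h0))
  · -- d = v - 1
    have hv1 : 1 ≤ v.val := by omega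
    refine hmem ⟨v.val - 1, by omega⟩ (Nat.dvd_of_mod_eq_zero (show (v.val - 1) % 5 = 0 by omega)) ?_
    refine cycle_adj_of_succ hn _ v ?_
    show (v.val - 1 + 1) % n = v.val
    rw [Nat.sub_add_cancel hv1, Nat.mod_eq_of_lt hvn]
  · -- d = v + 1
    have hlt : v.val + 1 < n := by omega
    refine hmem ⟨v.val + 1, hlt⟩ (Nat.dvd_of_mod_eq_zero (show (v.val + 1) % 5 = 0 by omega)) ?_
    refine (cycle_adj_of_succ hn v _ ?_).symm
    show (v.val + 1) % n = v.val + 1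
    exact Nat.mod_eq_of_lt hlt

/-- If G is a cycle on n vertices with n not in {3,6,7,11}, then ι₁(G) ≤ n/4. -/
theorem isolNum_one_cycle (n : ℕ) (hn : 3 ≤ n) (h : n ∉ ({3, 6, 7, 11} : Set ℕ)) :
    ((cycleGraph n).isolNum 1 : ℝ) ≤ (n : ℝ) / 4 := by
  set D : Set (Fin n) := {v : Fin n | 5 ∣ v.val} with hD
  set m : ℕ := (n + 4) / 5 with hm
  -- D is an isolating set
  have hiso : (cycleGraph n).IsIsolatingSet 1 D := by
    intro v hv
    obtain ⟨h5, hne⟩ := notMem_closedNbhd hn v hv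
    have hvn := v.isLt
    rcases h5 with h2 | h3
    · -- only possible outside neighbor is v + 1
      have hlt : v.val + 1 < n := by omega
      have hsub : {w | w ∉ (cycleGraph n).closedNbhd D ∧ (cycleGraph n).Adj v w} ⊆
          {(⟨v.val + 1, hlt⟩ : Fin n)} := by
        rintro w ⟨hw, haw⟩
        obtain ⟨hw5, hwne⟩ := notMem_closedNbhd hn w hw
        have hwn := w.isLt
        rcases cycle_adj_cases hn v w haw with hc | hc
        · rw [Nat.mod_eq_of_lt hlt] at hc
          exact Set.mem_singleton_iff.2 (Fin.ext hc)
        · exfalso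
          rcases Nat.lt_or_ge (w.val + 1) n with hlt2 | hge
          · rw [Nat.mod_eq_of_lt hlt2] at hc; omega
          · have hwn1 : w.val + 1 = n := by omega
            rw [hwn1, Nat.mod_self] at hc
            omega
      calc ({w | w ∉ (cycleGraph n).closedNbhd D ∧ (cycleGraph n).Adj v w}).ncard
          ≤ ({(⟨v.val + 1, hlt⟩ : Fin n)} : Set (Fin n)).ncard :=
            Set.ncard_le_ncard hsub (Set.finite_singleton _)
        _ = 1 := Set.ncard_singleton _
    · -- only possible outside neighbor is v - 1
      have hge3 : 3 ≤ v.val := by omega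
      have hsub : {w | w ∉ (cycleGraph n).closedNbhd D ∧ (cycleGraph n).Adj v w} ⊆
          {(⟨v.val - 1, by omega⟩ : Fin n)} := by
        rintro w ⟨hw, haw⟩
        obtain ⟨hw5, hwne⟩ := notMem_closedNbhd hn w hw
        have hwn := w.isLt
        rcases cycle_adj_cases hn v w haw with hc | hc
        · exfalso
          have hlt : v.val + 1 < n := by omega
          rw [Nat.mod_eq_of_lt hlt] at hc
          omega
        · rcases Nat.lt_or_ge (w.val + 1) n with hlt2 | hge
          · rw [Nat.mod_eq_of_lt hlt2] at hc
            exact Set.mem_singleton_iff.2 (Fin.ext (show w.val = v.val - 1 by omega))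
          · exfalso
            have hwn1 : w.val + 1 = n := by omega
            omega
      calc ({w | w ∉ (cycleGraph n).closedNbhd D ∧ (cycleGraph n).Adj v w}).ncard
          ≤ ({(⟨v.val - 1, by omega⟩ : Fin n)} : Set (Fin n)).ncard :=
            Set.ncard_le_ncard hsub (Set.finite_singleton _)
        _ = 1 := Set.ncard_singleton _
  -- cardinality bound
  have hcard : D.ncard ≤ m := by
    have hnpos : 0 < n := by omega
    have hsub : D ⊆ (fun j : ℕ => (⟨5 * j % n, Nat.mod_lt _ hnpos⟩ : Fin n)) '' Set.Iio m := by
      intro v hv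
      have hdvd : 5 ∣ v.val := hv
      have hvn := v.isLt
      have hdiv : 5 * (v.val / 5) = v.val := Nat.mul_div_cancel' hdvd
      refine ⟨v.val / 5, ?_, ?_⟩
      · simp only [Set.mem_Iio]; omega
      · apply Fin.ext
        simp only
        rw [hdiv, Nat.mod_eq_of_lt hvn]
    calc D.ncard ≤ ((fun j : ℕ => (⟨5 * j % n, Nat.mod_lt _ hnpos⟩ : Fin n)) '' Set.Iio m).ncard :=
          Set.ncard_le_ncard hsub ((Set.finite_Iio m).image _)
      _ ≤ (Set.Iio m).ncard := Set.ncard_image_le (Set.finite_Iio m)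
      _ = m := by rw [← Finset.coe_Iio, Set.ncard_coe_finset, Nat.card_Iio]
  have hle : (cycleGraph n).isolNum 1 ≤ m :=
    le_trans (Nat.sInf_le ⟨D, hiso, rfl⟩) hcard
  -- numerics
  simp only [Set.mem_insert_iff, Set.mem_singleton_iff, not_or] at h
  have h4 : 4 * m ≤ n := by omega
  rw [le_div_iff₀ (by norm_num : (0:ℝ) < 4)]
  have : (cycleGraph n).isolNum 1 * 4 ≤ n := by omega
  exact_mod_cast this
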